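/- Let A < 0, B ≥ 0, C ≤ 0 be real constants (with strict inequalities 2A < −β for given β). Then σ(t) = e^{B̄(T−t)}(C̄/B̄ − Ā) − C̄/B̄ with Ā = max(ε_A, 2A + ε_A), B̄ = 2B + ε_B, C̄ = min(−ε_C, 2C − ε_C), for ε_A, ε_C ≥ 0 and ε_B > 0, satisfies the two strict inequalities σ(T) < −2A and (1/2)σ'(t) − |σ(t)|·B + C > 0 for all t ∈ [0, T], provided ε_A > 0 and ε_C > 0. -/
import Mathlib


theorem stmt_8 (T A B C εA εB εC : ℝ) (hT : 0 < T)
    (hA : A < 0) (hB : 0 ≤ B) (hC : C ≤ 0)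
    (hεA : 0 < εA) (hεB : 0 < εB) (hεC : 0 < εC)
    (Abar Bbar Cbar : ℝ) (hAbar : Abar = max εA (2 * A + εA)) (hBbar : Bbar = 2 * B + εB)
    (hCbar : Cbar = min (-εC) (2 * C - εC))
    (σ : ℝ → ℝ)
    (hσ : ∀ t : ℝ, σ t = Real.exp (Bbar * (T - t)) * (Cbar / Bbar - Abar) - Cbar / Bbar) :
    σ T < -2 * A ∧
    ∀ t ∈ Set.Icc (0 : ℝ) T, (1 / 2) * deriv σ t - |σ t| * B + C > 0 := by
  have hB0 : 0 < Bbar := by rw [hBbar]; linarith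
  have hApos : 0 < Abar := by rw [hAbar]; exact lt_of_lt_of_le hεA (le_max_left _ _)
  have hA2 : 2 * A + εA ≤ Abar := by rw [hAbar]; exact le_max_right _ _
  have hCneg : Cbar < 0 := by
    rw [hCbar]; exact lt_of_le_of_lt (min_le_left _ _) (by linarith)
  have hC2 : Cbar ≤ 2 * C - εC := by rw [hCbar]; exact min_le_right _ _
  set X : ℝ := Cbar / Bbar - Abar with hXdef
  have hXneg : X < 0 := by
    have : Cbar / Bbar < 0 := div_neg_of_neg_of_pos hCneg hB0
    simp only [hXdef]; linarith
  have hq : (Cbar / Bbar) * Bbar = Cbar := div_mul_cancel₀ _ (ne_of_gt hB0)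
  constructor
  · have : σ T = -Abar := by
      rw [hσ T]; simp [hXdef]
    rw [this]; linarith
  · intro t ht
    obtain ⟨ht0, htT⟩ := ht
    have hderiv : HasDerivAt σ (Real.exp (Bbar * (T - t)) * (Bbar * (-1)) * X) t := by
      have h1 : HasDerivAt (fun s : ℝ => Bbar * (T - s)) (Bbar * (-1)) t := by
        simpa using ((hasDerivAt_id t).const_sub T).const_mul Bbar
      have h2 := ((h1.exp.mul_const X).sub_const (Cbar / Bbar))
      have : σ = fun s => Real.exp (Bbar * (T - s)) * X - Cbar / Bbar := funext hσ
      rw [this]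
      exact h2
    rw [hderiv.deriv]
    have he : 1 ≤ Real.exp (Bbar * (T - t)) := by
      apply Real.one_le_exp
      have : 0 ≤ T - t := by linarith
      positivity
    set E := Real.exp (Bbar * (T - t)) with hE
    have hσt : σ t = E * X - Cbar / Bbar := hσ t
    have hσneg : σ t < 0 := by
      rw [hσt]
      have hEX : E * X ≤ X := by nlinarith
      have : Cbar / Bbar < 0 := div_neg_of_neg_of_pos hCneg hB0
      simp only [hXdef] at hEX ⊢
      nlinarith
    rw [abs_of_neg hσneg, hσt]
    have hEX : -(εB / 2) * (E * X) ≥ -(εB / 2) * X := by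
      nlinarith [mul_nonneg (mul_nonneg (by linarith : (0:ℝ) ≤ εB / 2) (sub_nonneg.2 he)) (neg_nonneg.2 hXneg.le)]
    have hqB : Cbar / Bbar * Bbar = Cbar := hq
    -- goal: 1/2 * (E * (Bbar * -1) * X) - -(E * X - Cbar / Bbar) * B + C > 0
    have key : 1 / 2 * (E * (Bbar * (-1)) * X) - -(E * X - Cbar / Bbar) * B + C
        = -(εB / 2) * (E * X) - (Cbar / Bbar) * B + C := by
      rw [hBbar]; ring
    rw [key]
    have hq' := hq
    rw [hBbar] at hq'
    have h3 : (Cbar / Bbar) * (εB / 2 + B) = Cbar / 2 := by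
      rw [hBbar]
      linear_combination hq' / 2
    have heq : -(εB / 2) * X - (Cbar / Bbar) * B = εB / 2 * Abar - Cbar / 2 := by
      rw [hXdef]; linear_combination -h3
    have hfin : -(εB / 2) * X - (Cbar / Bbar) * B + C ≥ εB / 2 * Abar + εC / 2 := by
      linarith
    have := mul_pos (half_pos hεB) hApos
    linarith
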